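/- Let p be a prime and r ≥ 1 with p^r > 2. If nonnegative integers k_1,...,k_n satisfy (k_1+···+k_n)!/(k_1!···k_n!) = p^r, then exactly two of the k_i are nonzero, one of them equals 1 and the other equals p^r − 1. -/

import Mathlib

private lemma choose_mono_half {S a b : ℕ} (hab : a ≤ b) (hb : b ≤ S / 2) :
    S.choose a ≤ S.choose b := by
  induction b, hab using Nat.le_induction with
  | base => exact le_rfl
  | succ b hb' ih =>
    exact (ih (by omega)).trans (Nat.choose_le_succ_of_lt_half_left (by omega))

private lemma lt_choose_aux {S t : ℕ} (h2 : 2 ≤ t) (hS : t + 2 ≤ S) : S < S.choose t := by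
  have hS4 : 4 ≤ S := by omega
  have hbase : S < S.choose 2 := by
    rw [Nat.choose_two_right]
    have h1 : (S + 1) * 2 ≤ S * (S - 1) := by nlinarith [Nat.sub_add_cancel (show 1 ≤ S by omega)]
    have := (Nat.le_div_iff_mul_le (by norm_num)).mpr h1
    omega
  rcases le_or_gt t (S / 2) with hle | hgt
  · exact hbase.trans_le (choose_mono_half h2 hle)
  · rw [← Nat.choose_symm (show t ≤ S by omega)]
    exact hbase.trans_le (choose_mono_half (by omega) (by omega))

theorem multinomial_prime_pow_structure (p r n : ℕ) (hp : p.Prime) (hr : 1 ≤ r)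
    (hpr : 2 < p ^ r) (k : Fin n → ℕ)
    (h : (∑ i, k i).factorial / ∏ i, (k i).factorial = p ^ r) :
    ∃ i j, i ≠ j ∧ k i = 1 ∧ k j = p ^ r - 1 ∧
      ∀ l, l ≠ i → l ≠ j → k l = 0 := by
  classical
  set S := ∑ i, k i with hSdef
  have hM : Nat.multinomial Finset.univ k = p ^ r := h
  -- S positive
  have hS0 : 0 < S := by
    rcases Nat.eq_zero_or_pos S with h0 | h0
    · exfalso
      rw [h0] at h
      have h1 : (0:ℕ).factorial / ∏ i, (k i).factorial ≤ 1 := Nat.div_le_self _ _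
      omega
    · exact h0
  -- each k i ≤ S
  have hki : ∀ i, k i ≤ S :=
    fun i => Finset.single_le_sum (fun _ _ => Nat.zero_le _) (Finset.mem_univ i)
  -- each binomial divides p^r
  have hdvd : ∀ i, S.choose (k i) ∣ p ^ r := by
    intro i
    have hi : i ∉ Finset.univ.erase i := Finset.notMem_erase i _
    have hins := Nat.multinomial_insert hi k
    rw [Finset.insert_erase (Finset.mem_univ i),
      Finset.add_sum_erase _ k (Finset.mem_univ i)] at hins
    exact ⟨_, by rw [← hM, hins]⟩
  -- no k i equals S
  have hne : ∀ i, k i ≠ S := by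
    intro i hiS
    have hsum := Finset.add_sum_erase Finset.univ k (Finset.mem_univ i)
    have hrest0 : ∑ l ∈ Finset.univ.erase i, k l = 0 := by omega
    have hrest : ∀ j, j ≠ i → k j = 0 := fun j hj =>
      Finset.sum_eq_zero_iff.mp hrest0 j (Finset.mem_erase.mpr ⟨hj, Finset.mem_univ j⟩)
    have hprod : ∏ j, (k j).factorial = S.factorial := by
      rw [Finset.prod_eq_single i (fun j _ hj => by rw [hrest j hj]; rfl)
        (fun hni => absurd (Finset.mem_univ i) hni), hiS]
    rw [hprod, Nat.div_self (Nat.factorial_pos S)] at h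
    omega
  -- classification
  have hclass : ∀ i, k i = 0 ∨ k i = 1 ∨ k i = S - 1 := by
    intro i
    by_contra hc
    push_neg at hc
    obtain ⟨h0, h1, hSm⟩ := hc
    have h2 : 2 ≤ k i := by omega
    have h2' : k i + 2 ≤ S := by
      have := hki i; have := hne i; omega
    have hlt : S < S.choose (k i) := lt_choose_aux h2 h2'
    obtain ⟨t, htr, hte⟩ := (Nat.dvd_prime_pow hp).mp (hdvd i)
    have hle : S.choose (k i) ≤ S := by
      have hb := Nat.pow_factorization_choose_le (p := p) (k := k i) hS0
      rw [hte, hp.factorization_pow, Finsupp.single_eq_same] at hb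
      rw [hte]; exact hb
    omega
  rcases lt_or_ge S 3 with hS3 | hS3
  · -- S = 1 or S = 2: contradiction
    exfalso
    have hle1 : ∀ i, k i ≤ 1 := by
      intro i
      rcases hclass i with h0 | h1 | hm
      · omega
      · omega
      · have := hne i; omega
    have hprod1 : ∏ i, (k i).factorial = 1 := by
      apply Finset.prod_eq_one
      intro i _
      rcases Nat.le_one_iff_eq_zero_or_eq_one.mp (hle1 i) with h'|h' <;> simp [h']
    rw [hprod1, Nat.div_one] at h
    interval_cases S <;> simp [Nat.factorial] at h <;> omega
  · -- S ≥ 3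
    by_cases hex : ∃ j, k j = S - 1
    · obtain ⟨j, hj⟩ := hex
      have hsum := Finset.add_sum_erase Finset.univ k (Finset.mem_univ j)
      have hrest1 : ∑ l ∈ Finset.univ.erase j, k l = 1 := by omega
      have hexi : ∃ i ∈ Finset.univ.erase j, k i ≠ 0 := by
        by_contra hc
        push_neg at hc
        rw [Finset.sum_eq_zero hc] at hrest1
        omega
      obtain ⟨i, hi_mem, hi_ne⟩ := hexi
      have hij : i ≠ j := (Finset.mem_erase.mp hi_mem).1
      have hile : k i ≤ 1 := hrest1 ▸ Finset.single_le_sum (fun _ _ => Nat.zero_le _) hi_mem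
      have hki1 : k i = 1 := by omega
      have hzero : ∀ l, l ≠ i → l ≠ j → k l = 0 := by
        intro l hl hlj
        have hsum2 := Finset.add_sum_erase (Finset.univ.erase j) k hi_mem
        have hrest0 : ∑ m ∈ (Finset.univ.erase j).erase i, k m = 0 := by omega
        exact Finset.sum_eq_zero_iff.mp hrest0 l
          (Finset.mem_erase.mpr ⟨hl, Finset.mem_erase.mpr ⟨hlj, Finset.mem_univ l⟩⟩)
      have hprod : ∏ l, (k l).factorial = (S - 1).factorial := by
        rw [Finset.prod_eq_single j ?_ (fun hnj => absurd (Finset.mem_univ j) hnj), hj]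
        intro l _ hl
        rcases eq_or_ne l i with rfl | hli
        · rw [hki1]; rfl
        · rw [hzero l hli hl]; rfl
      have hfac : S.factorial = S * (S - 1).factorial :=
        (Nat.mul_factorial_pred hS0.ne').symm
      rw [hprod, hfac, Nat.mul_div_cancel _ (Nat.factorial_pos _)] at h
      exact ⟨i, j, hij, hki1, by rw [hj, h], hzero⟩
    · -- all nonzero k i = 1, so S! = p^r, impossible
      exfalso
      push_neg at hex
      have hle1 : ∀ i, k i ≤ 1 := by
        intro i
        rcases hclass i with h0 | h1 | hm
        · omega
        · omega
        · exact absurd hm (hex i)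
      have hprod1 : ∏ i, (k i).factorial = 1 := by
        apply Finset.prod_eq_one
        intro i _
        rcases Nat.le_one_iff_eq_zero_or_eq_one.mp (hle1 i) with h'|h' <;> simp [h']
      rw [hprod1, Nat.div_one] at h
      have h2d : (2:ℕ) ∣ p ^ r := h ▸ Nat.dvd_factorial (by norm_num) (by omega)
      have h3d : (3:ℕ) ∣ p ^ r := h ▸ Nat.dvd_factorial (by norm_num) (by omega)
      have hp2 : p = 2 :=
        ((Nat.prime_dvd_prime_iff_eq Nat.prime_two hp).mp
          (Nat.Prime.dvd_of_dvd_pow Nat.prime_two h2d)).symm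
      have hp3 : p = 3 :=
        ((Nat.prime_dvd_prime_iff_eq Nat.prime_three hp).mp
          (Nat.Prime.dvd_of_dvd_pow Nat.prime_three h3d)).symm
      omega
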